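/- Let F be a field with char F ≠ 2 and γ = [[a,b],[c,d]] ∈ SL₂(F) with c ≠ 0. Equip W = F² with the symplectic form ⟨(r,s)|(r',s')⟩ = rs' − r's and W^□ = W ⊕ W with the form (−⟨·|·⟩) ⊕ ⟨·|·⟩. Let ℓ = F·(1,0) ⊂ W, ℓ₁ = ℓ ⊕ ℓ ⊂ W^□, and Γ_{−γ} = {(w, −γw) : w ∈ W} ⊂ W^□. Then W^□ = ℓ₁ ⊕ Γ_{−γ}, and for every v = (α,β;α,β) in the diagonal Γ₁, writing v = v₁ + v₃ with v₁ ∈ ℓ₁, v₃ ∈ Γ_{−γ}, one has ⟨v₁ | v₃⟩_{W^□} = −(2 + a + d)·β²/c. -/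

import Mathlib

/-- `W^□ = ℓ₁ ⊕ Γ_{−γ}` for `γ ∈ SL₂(F)` with `c ≠ 0`, and the cross pairing of the two
components of a diagonal vector `(α,β;α,β)` equals `−(2+a+d)β²/c`. -/
theorem stmt_15 (F : Type*) [Field F] (h2 : (2 : F) ≠ 0)
    (a b c d : F) (hdet : a * d - b * c = 1) (hc : c ≠ 0) :
    ∀ sy : (F × F) → (F × F) → F,
      (∀ p q : F × F, sy p q = p.1 * q.2 - p.2 * q.1) →
      ∀ Ω : ((F × F) × (F × F)) → ((F × F) × (F × F)) → F,
        (∀ v w : (F × F) × (F × F), Ω v w = -(sy v.1 w.1) + sy v.2 w.2) →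
        ((∀ v : (F × F) × (F × F),
            ∃! rstu : (F × F) × (F × F),
              v = ((rstu.1.1, 0), (rstu.1.2, 0)) +
                  (rstu.2, (-(a * rstu.2.1 + b * rstu.2.2),
                            -(c * rstu.2.1 + d * rstu.2.2)))) ∧
         (∀ α β r s t u : F,
            ((α, β), (α, β)) =
              (((r, 0), (s, 0)) : (F × F) × (F × F)) +
                ((t, u), (-(a * t + b * u), -(c * t + d * u))) →
            Ω ((r, 0), (s, 0)) ((t, u), (-(a * t + b * u), -(c * t + d * u)))
              = -(2 + a + d) * β ^ 2 / c)) := by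
  intro sy hsy Ω hΩ
  constructor
  · intro v
    obtain ⟨⟨x1, x2⟩, y1, y2⟩ := v
    set t : F := (-y2 - d * x2) / c with ht
    refine ⟨((x1 - t, y1 + a * t + b * x2), (t, x2)), ?_, ?_⟩
    · simp only [Prod.mk_add_mk, Prod.mk.injEq]
      refine ⟨⟨by ring, by ring⟩, by ring, ?_⟩
      rw [ht]
      field_simp
      ring
    · rintro ⟨⟨r, s⟩, tt, u⟩ h
      simp only [Prod.mk_add_mk, Prod.mk.injEq] at h
      obtain ⟨⟨h1, h2'⟩, h3, h4⟩ := h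
      have hu : u = x2 := by linear_combination -h2'
      have htt : tt = t := by
        rw [ht, eq_div_iff hc]
        linear_combination h4 + d * h2'
      subst hu htt
      have hr : r = x1 - t := by linear_combination -h1
      have hs : s = y1 + a * t + b * u := by linear_combination -h3
      subst hr hs
      rfl
  · intro α β r s t u h
    simp only [Prod.mk_add_mk, Prod.mk.injEq] at h
    obtain ⟨⟨h1, h2'⟩, h3, h4⟩ := h
    rw [hΩ, hsy, hsy]
    simp only
    rw [eq_div_iff hc]
    linear_combination (c * u) * h1 + (c * (c * t + d * u)) * h3 +
      (c * α - c * t - c * b * β + d * (1 + a) * β) * h2' +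
      (β * (1 + a) - c * (α + a * t + b * u)) * h4 - β ^ 2 * hdet
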